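/- Let x, y, c be points with d(x,y) > 0, and suppose the open ball B(y, ε) satisfies: every point of B(y,ε) is strictly closer to y than to a third point t', given that d(y, t') > 2ε and d(x,y) ≤ d(x,t'). Then every point z in Cone(x, B(y,ε)) satisfies d(z,y) < d(z,t'). In other words, moving within the cone toward B(y,ε) preserves y being the closest of the two targets. -/

import Mathlib

noncomputable section

open Metric

/-- The open cone from `x` to the open disk `B(y,ε)`: the union of all segments
from `x` to points of the open disk, with the apex `x` removed. -/
def Cone (x y : EuclideanSpace ℝ (Fin 2)) (l : ℝ) : Set (EuclideanSpace ℝ (Fin 2)) :=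
  {z | z ≠ x ∧ ∃ w, dist w y < l ∧ z ∈ segment ℝ x w}

lemma sq_dist_iff_lt (a y t' : EuclideanSpace ℝ (Fin 2)) :
    dist a y < dist a t' ↔ 2 * inner ℝ a (t' - y) < ‖t'‖^2 - ‖y‖^2 := by
  have h1 : dist a y < dist a t' ↔ ‖a - y‖^2 < ‖a - t'‖^2 := by
    rw [dist_eq_norm, dist_eq_norm]
    constructor
    · intro h; exact pow_lt_pow_left₀ h (norm_nonneg _) (by norm_num)
    · intro h; exact lt_of_pow_lt_pow_left₀ 2 (norm_nonneg _) h
  rw [h1, norm_sub_sq_real, norm_sub_sq_real, @inner_sub_right ℝ]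
  constructor <;> intro h <;> linarith

lemma sq_dist_iff_le (a y t' : EuclideanSpace ℝ (Fin 2)) :
    dist a y ≤ dist a t' ↔ 2 * inner ℝ a (t' - y) ≤ ‖t'‖^2 - ‖y‖^2 := by
  rw [← not_lt, ← not_lt, not_iff_not]
  have := sq_dist_iff_lt a t' y
  rw [this]
  rw [@inner_sub_right ℝ, @inner_sub_right ℝ]
  constructor <;> intro h <;> linarith

/-- Let `y` and `t'` be two targets with `d(y,t') > 2ε`, and let `x` be a point
with `d(x,y) > 0` and `d(x,y) ≤ d(x,t')`.  Then every point `z` of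
`Cone(x, B(y,ε))` satisfies `d(z,y) < d(z,t')`: moving within the cone toward
`B(y,ε)` preserves `y` being the closest of the two targets. -/
theorem cone_preserves_closest_target
    (x y t' : EuclideanSpace ℝ (Fin 2)) (ε : ℝ) (hε : 0 < ε)
    (hxy : 0 < dist x y)
    (hsep : 2 * ε < dist y t')
    (hx : dist x y ≤ dist x t') :
    ∀ z ∈ Cone x y ε, dist z y < dist z t' := by
  rintro z ⟨hzx, w, hw, a, b, ha, hb, hab, hz⟩
  have hbpos : 0 < b := by
    rcases hb.lt_or_eq with h | h
    · exact h
    · exfalso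
      apply hzx
      have ha1 : a = 1 := by linarith
      rw [← hz, ← h, ha1]
      simp
  have hwdist : dist w y < dist w t' := by
    have h1 : dist y t' ≤ dist y w + dist w t' := dist_triangle _ _ _
    have h2 : dist y w = dist w y := dist_comm _ _
    linarith
  have hw' : 2 * inner ℝ w (t' - y) < ‖t'‖^2 - ‖y‖^2 := (sq_dist_iff_lt w y t').mp hwdist
  have hx' : 2 * inner ℝ x (t' - y) ≤ ‖t'‖^2 - ‖y‖^2 := (sq_dist_iff_le x y t').mp hx
  rw [sq_dist_iff_lt]
  rw [← hz]
  rw [@inner_add_left ℝ, real_inner_smul_left, real_inner_smul_left]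
  nlinarith [mul_nonneg ha (sub_nonneg.mpr hx'), mul_pos hbpos (sub_pos.mpr hw')]
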